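/- (Correctness of the MRL estimator, combining the Representer theorem with eqs. (19)–(20).) Let K be the Gram matrix K_{ij} = ⟪kᵢ, kⱼ⟫, let L ∈ ℝ^{N×N}in addition be symmetric positive semidefinite, let γ_k > 0, γ_M ≥ 0, let q ∈ ℝ^N have qᵢ = pᵢ for i ≤ l and qᵢ = 0 for i > l, and let J be the diagonal 0/1 indicator matrix of the first l coordinates. If a* ∈ ℝ^N satisfies (J K + l·γ_k·I_N + l·γ_M·L K)·a* = q, then f* = Σ_{i=1}^N a*ᵢ·kᵢ is a global minimizer of the objective over the whole space: J(f*) ≤ J(f) for every f ∈ H. -/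

import Mathlib

open Matrix RealInnerProductSpace

/-- Correctness of the MRL estimator (Representer theorem combined with
eqs. (19)–(20)): if `a*` solves `(JK + lγₖ I + lγ_M LK) a* = q` where `K` is
the Gram matrix of the kernel sections, `L` is symmetric positive semidefinite,
`γₖ > 0` and `γ_M ≥ 0`, then `f* = Σᵢ a*ᵢ kᵢ` globally minimizes the
manifold-regularized objective over the whole space `H`. -/
theorem stmt_11 {H : Type*} [NormedAddCommGroup H] [InnerProductSpace ℝ H]
    (N l : ℕ) (hl : 1 ≤ l) (hlN : l ≤ N)
    (k : Fin N → H) (p : Fin l → ℝ)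
    (L : Matrix (Fin N) (Fin N) ℝ) (hL : L.PosSemidef)
    (γk γM : ℝ) (hγk : 0 < γk) (hγM : 0 ≤ γM)
    (K : Matrix (Fin N) (Fin N) ℝ) (hK : ∀ i j, K i j = ⟪k i, k j⟫)
    (q : Fin N → ℝ)
    (hq : ∀ i : Fin N, q i = if h : (i : ℕ) < l then p ⟨i, h⟩ else 0)
    (Jm : Matrix (Fin N) (Fin N) ℝ)
    (hJm : Jm = Matrix.diagonal (fun i : Fin N => if (i : ℕ) < l then (1 : ℝ) else 0))
    (J : H → ℝ)
    (hJ : ∀ f : H, J f =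
        (1 / (l : ℝ)) * ∑ i : Fin l, (p i - ⟪f, k (Fin.castLE hlN i)⟫) ^ 2
        + γk * ⟪f, f⟫
        + γM * ∑ i : Fin N, ∑ j : Fin N, L i j * ⟪f, k i⟫ * ⟪f, k j⟫)
    (astar : Fin N → ℝ)
    (hsol : (Jm * K + ((l : ℝ) * γk) • (1 : Matrix (Fin N) (Fin N) ℝ)
        + ((l : ℝ) * γM) • (L * K)).mulVec astar = q) :
    ∀ f : H, J (∑ i : Fin N, astar i • k i) ≤ J f := by
  intro f
  have hlR : (0:ℝ) < l := by exact_mod_cast Nat.lt_of_lt_of_le Nat.zero_lt_one hl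
  have hlne : (l:ℝ) ≠ 0 := ne_of_gt hlR
  set fs : H := ∑ i : Fin N, astar i • k i with hfs
  set g : H := f - fs with hg
  have hfg : f = fs + g := by rw [hg]; abel
  set b : Fin N → ℝ := fun j => ⟪g, k j⟫ with hb
  set u : Fin N → ℝ := fun j => ⟪fs, k j⟫ with hu
  set Lu : Fin N → ℝ := fun i => ∑ j : Fin N, L i j * u j with hLu
  -- symmetry of K and L
  have hKsym : ∀ i j, K i j = K j i := by
    intro i j; rw [hK, hK, real_inner_comm]
  have hLsym : ∀ i j, L i j = L j i := by
    intro i j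
    have := congrFun (congrFun hL.1 i) j
    simpa [Matrix.conjTranspose_apply] using this.symm
  -- formula for u
  have huK : ∀ j, u j = ∑ i : Fin N, astar i * K i j := by
    intro j
    simp only [hu, hfs, sum_inner, real_inner_smul_left]
    exact Finset.sum_congr rfl fun i _ => by rw [hK]
  -- inner products of f
  have hfk : ∀ j, ⟪f, k j⟫ = u j + b j := by
    intro j; rw [hfg, inner_add_left]
  have hS : ⟪fs, g⟫ = ∑ i : Fin N, astar i * b i := by
    simp only [hfs, sum_inner, real_inner_smul_left]
    exact Finset.sum_congr rfl fun i _ => by rw [real_inner_comm]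
  have hff : ⟪f, f⟫ = ⟪fs, fs⟫ + 2 * (∑ i : Fin N, astar i * b i) + ⟪g, g⟫ := by
    rw [hfg, real_inner_add_add_self, hS]
  -- componentwise form of the linear system
  have hsol' : ∀ j : Fin N,
      (if (j:ℕ) < l then u j else 0) + (l:ℝ) * γk * astar j + (l:ℝ) * γM * Lu j = q j := by
    intro j
    have h0 := congrFun hsol j
    have hKa : K.mulVec astar = u := by
      funext j'
      rw [huK]
      simp only [Matrix.mulVec, dotProduct]
      exact Finset.sum_congr rfl fun i _ => by rw [hKsym j' i, mul_comm]
    rw [Matrix.add_mulVec, Matrix.add_mulVec, Matrix.smul_mulVec,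
        Matrix.smul_mulVec, Matrix.one_mulVec, ← Matrix.mulVec_mulVec,
        ← Matrix.mulVec_mulVec, hKa] at h0
    simp only [Pi.add_apply, Pi.smul_apply, smul_eq_mul, hJm,
      Matrix.mulVec_diagonal] at h0
    have hLuj : L.mulVec u j = Lu j := by
      simp only [hLu, Matrix.mulVec, dotProduct]
    rw [hLuj] at h0
    rw [← h0]
    by_cases hjl : (j:ℕ) < l <;> simp [hjl] <;> try ring
  -- abbreviations for the scalar sums
  set E : ℝ := ∑ i : Fin l, (p i - u (Fin.castLE hlN i)) * b (Fin.castLE hlN i) with hE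
  set B2 : ℝ := ∑ i : Fin l, (b (Fin.castLE hlN i)) ^ 2 with hB2
  set S : ℝ := ∑ i : Fin N, astar i * b i with hSdef
  set Tuu : ℝ := ∑ i : Fin N, ∑ j : Fin N, L i j * u i * u j with hTuu
  set Tub : ℝ := ∑ i : Fin N, ∑ j : Fin N, L i j * u i * b j with hTub
  set Tbu : ℝ := ∑ i : Fin N, ∑ j : Fin N, L i j * b i * u j with hTbu
  set Tbb : ℝ := ∑ i : Fin N, ∑ j : Fin N, L i j * b i * b j with hTbb
  -- the two mixed terms equal sums against Lu
  have hTub' : Tub = ∑ j : Fin N, Lu j * b j := by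
    rw [hTub, Finset.sum_comm]
    refine Finset.sum_congr rfl fun j _ => ?_
    rw [hLu, Finset.sum_mul]
    exact Finset.sum_congr rfl fun i _ => by rw [hLsym j i]
  have hTbu' : Tbu = ∑ j : Fin N, Lu j * b j := by
    rw [hTbu]
    refine Finset.sum_congr rfl fun i _ => ?_
    rw [hLu, Finset.sum_mul]
    exact Finset.sum_congr rfl fun j _ => by ring
  -- E as a sum over Fin N
  have hE' : E = ∑ j : Fin N,
      (if h : (j:ℕ) < l then (p ⟨j, h⟩ - u j) * b j else 0) := by
    classical
    rw [hE]
    have hzero : ∀ j ∈ (Finset.univ : Finset (Fin N)),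
        j ∉ (Finset.univ : Finset (Fin l)).map (Fin.castLEEmb hlN) →
        (if h : (j:ℕ) < l then (p ⟨j, h⟩ - u j) * b j else 0) = 0 := by
      intro j _ hj
      rw [dif_neg]
      intro hjl
      exact hj (Finset.mem_map.mpr ⟨⟨(j:ℕ), hjl⟩, Finset.mem_univ _, Fin.ext rfl⟩)
    rw [← Finset.sum_subset (Finset.subset_univ _) hzero, Finset.sum_map]
    refine Finset.sum_congr rfl fun i _ => ?_
    have hi : ((Fin.castLEEmb hlN i : Fin N) : ℕ) < l := by
      simpa using i.isLt
    rw [dif_pos hi]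
    have h2 : (⟨((Fin.castLEEmb hlN i : Fin N) : ℕ), hi⟩ : Fin l) = i := Fin.ext rfl
    rw [h2]
    rfl
  -- the cross term vanishes
  have hC : 2 * γk * S + γM * (Tub + Tbu) = (2 / (l:ℝ)) * E := by
    have hEval : E = ∑ j : Fin N, ((l:ℝ) * γk * astar j + (l:ℝ) * γM * Lu j) * b j := by
      rw [hE']
      refine Finset.sum_congr rfl fun j _ => ?_
      by_cases hjl : (j:ℕ) < l
      · have h1 := hsol' j
        rw [if_pos hjl] at h1
        rw [dif_pos hjl]
        have hqj : q j = p ⟨j, hjl⟩ := by rw [hq]; rw [dif_pos hjl]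
        have : p ⟨j, hjl⟩ - u j = (l:ℝ) * γk * astar j + (l:ℝ) * γM * Lu j := by
          rw [← hqj]; linarith
        rw [this]
      · have h1 := hsol' j
        rw [if_neg hjl] at h1
        have hqj : q j = 0 := by rw [hq]; rw [dif_neg hjl]
        rw [dif_neg hjl]
        have : (l:ℝ) * γk * astar j + (l:ℝ) * γM * Lu j = 0 := by
          rw [← hqj] at h1 ⊢; linarith
        rw [this, zero_mul]
    rw [hEval, hTub', hTbu']
    have : ∑ j : Fin N, ((l:ℝ) * γk * astar j + (l:ℝ) * γM * Lu j) * b j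
        = (l:ℝ) * γk * S + (l:ℝ) * γM * ∑ j : Fin N, Lu j * b j := by
      rw [hSdef, Finset.mul_sum, Finset.mul_sum, ← Finset.sum_add_distrib]
      exact Finset.sum_congr rfl fun j _ => by ring
    rw [this]
    field_simp
    ring
  -- quadratic remainder is nonnegative
  have hB2n : 0 ≤ B2 := Finset.sum_nonneg fun i _ => sq_nonneg _
  have hGn : (0:ℝ) ≤ ⟪g, g⟫ := real_inner_self_nonneg
  have hTbbn : 0 ≤ Tbb := by
    have h2 := hL.dotProduct_mulVec_nonneg b
    simp only [star_trivial, dotProduct, Matrix.mulVec] at h2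
    rw [hTbb]
    calc (0:ℝ) ≤ ∑ i : Fin N, b i * ∑ j : Fin N, L i j * b j := h2
    _ = ∑ i : Fin N, ∑ j : Fin N, L i j * b i * b j := by
        refine Finset.sum_congr rfl fun i _ => ?_
        rw [Finset.mul_sum]
        exact Finset.sum_congr rfl fun j _ => by ring
  -- main expansion identities
  have hA : ∑ i : Fin l, (p i - (u (Fin.castLE hlN i) + b (Fin.castLE hlN i))) ^ 2
      = (∑ i : Fin l, (p i - u (Fin.castLE hlN i)) ^ 2) + B2 - 2 * E := by
    rw [hB2, hE, Finset.mul_sum, ← Finset.sum_add_distrib, ← Finset.sum_sub_distrib]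
    exact Finset.sum_congr rfl fun i _ => by ring
  have hBsum : ∑ i : Fin N, ∑ j : Fin N, L i j * (u i + b i) * (u j + b j)
      = Tuu + Tub + Tbu + Tbb := by
    rw [hTuu, hTub, hTbu, hTbb, ← Finset.sum_add_distrib, ← Finset.sum_add_distrib,
      ← Finset.sum_add_distrib]
    refine Finset.sum_congr rfl fun i _ => ?_
    rw [← Finset.sum_add_distrib, ← Finset.sum_add_distrib, ← Finset.sum_add_distrib]
    exact Finset.sum_congr rfl fun j _ => by ring
  -- finish
  rw [hJ f, hJ fs]
  simp only [hfk, hff]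
  rw [hA, hBsum]
  have hfsu : ∀ i, ⟪fs, k i⟫ = u i := fun i => rfl
  simp only [hfsu]
  have hQ : 0 ≤ (1 / (l:ℝ)) * B2 + γk * ⟪g, g⟫ + γM * Tbb := by
    have h1 : 0 ≤ (1 / (l:ℝ)) * B2 := by positivity
    have h2 : 0 ≤ γk * ⟪g, g⟫ := mul_nonneg (le_of_lt hγk) hGn
    have h3 : 0 ≤ γM * Tbb := mul_nonneg hγM hTbbn
    linarith
  have key : (1 / (l:ℝ)) * ((∑ i : Fin l, (p i - u (Fin.castLE hlN i)) ^ 2) + B2 - 2 * E)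
      + γk * (⟪fs, fs⟫ + 2 * S + ⟪g, g⟫) + γM * (Tuu + Tub + Tbu + Tbb)
      = ((1 / (l:ℝ)) * (∑ i : Fin l, (p i - u (Fin.castLE hlN i)) ^ 2)
        + γk * ⟪fs, fs⟫ + γM * Tuu)
      + ((1 / (l:ℝ)) * B2 + γk * ⟪g, g⟫ + γM * Tbb) := by
    linear_combination hC
  linarith [key, hQ]
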